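/- arXiv:1609.00834 — 3 statements merged into one kernel-verified Lean document; each statement's English description precedes it below -/
import Mathlib

section
/- Let f₁ and f₂ be continuous functions on [0,1]² that are real analytic on the open square (0,1)², and let b₁, b₂ be continuous functions on [0,1]² satisfying bᵢ(s,t) = 0 whenever |s−t| ≥ δᵢ for some δ₁, δ₂ < 1. If f₁ + b₁ = f₂ + b₂ on [0,1]², then f₁ = f₂ and b₁ = b₂. -/
open Set

/-- If two kernels, each continuous on `[0,1]²` and real analytic on `(0,1)²`, differ by
banded (bandwidths `δ₁, δ₂ < 1`) continuous kernels, i.e. `f₁ + b₁ = f₂ + b₂`, then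
`f₁ = f₂` and `b₁ = b₂` on `[0,1]²`. -/
theorem uniqueness_analytic_plus_banded
    (f₁ f₂ b₁ b₂ : ℝ × ℝ → ℝ) (δ₁ δ₂ : ℝ) (hδ₁ : δ₁ < 1) (hδ₂ : δ₂ < 1)
    (hf₁c : ContinuousOn f₁ (Icc (0:ℝ) 1 ×ˢ Icc (0:ℝ) 1))
    (hf₂c : ContinuousOn f₂ (Icc (0:ℝ) 1 ×ˢ Icc (0:ℝ) 1))
    (hb₁c : ContinuousOn b₁ (Icc (0:ℝ) 1 ×ˢ Icc (0:ℝ) 1))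
    (hb₂c : ContinuousOn b₂ (Icc (0:ℝ) 1 ×ˢ Icc (0:ℝ) 1))
    (hf₁a : AnalyticOnNhd ℝ f₁ (Ioo (0:ℝ) 1 ×ˢ Ioo (0:ℝ) 1))
    (hf₂a : AnalyticOnNhd ℝ f₂ (Ioo (0:ℝ) 1 ×ˢ Ioo (0:ℝ) 1))
    (hb₁0 : ∀ p : ℝ × ℝ, δ₁ ≤ |p.1 - p.2| → b₁ p = 0)
    (hb₂0 : ∀ p : ℝ × ℝ, δ₂ ≤ |p.1 - p.2| → b₂ p = 0)
    (hsum : ∀ p ∈ Icc (0:ℝ) 1 ×ˢ Icc (0:ℝ) 1, f₁ p + b₁ p = f₂ p + b₂ p) :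
    (∀ p ∈ Icc (0:ℝ) 1 ×ˢ Icc (0:ℝ) 1, f₁ p = f₂ p) ∧
    (∀ p ∈ Icc (0:ℝ) 1 ×ˢ Icc (0:ℝ) 1, b₁ p = b₂ p) := by
  set c : ℝ := max (max δ₁ δ₂) 0 with hc
  have hc0 : 0 ≤ c := le_max_right _ _
  have hc1 : c < 1 := by
    simp only [hc, max_lt_iff]
    exact ⟨⟨hδ₁, hδ₂⟩, one_pos⟩
  set U : Set (ℝ × ℝ) := Ioo ((1+c)/2) 1 ×ˢ Ioo 0 ((1-c)/2) with hU
  have hUopen : IsOpen U := (isOpen_Ioo.prod isOpen_Ioo)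
  have hUsub : U ⊆ Ioo (0:ℝ) 1 ×ˢ Ioo (0:ℝ) 1 := by
    rintro ⟨s, t⟩ ⟨⟨hs1, hs2⟩, ⟨ht1, ht2⟩⟩
    exact ⟨⟨by nlinarith, hs2⟩, ⟨ht1, by nlinarith⟩⟩
  have hband : ∀ p ∈ U, δ₁ ≤ |p.1 - p.2| ∧ δ₂ ≤ |p.1 - p.2| := by
    rintro ⟨s, t⟩ ⟨⟨hs1, hs2⟩, ⟨ht1, ht2⟩⟩
    have h1 : c ≤ s - t := by simp only [hU] at *; nlinarith
    have h2 : c ≤ |s - t| := le_trans h1 (le_abs_self _)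
    exact ⟨le_trans (le_trans (le_max_left _ _) (le_max_left _ _)) h2,
      le_trans (le_trans (le_max_right _ _) (le_max_left _ _)) h2⟩
  have hsq : Ioo (0:ℝ) 1 ×ˢ Ioo (0:ℝ) 1 ⊆ Icc (0:ℝ) 1 ×ˢ Icc (0:ℝ) 1 :=
    prod_mono Ioo_subset_Icc_self Ioo_subset_Icc_self
  have hEqU : EqOn f₁ f₂ U := by
    intro p hp
    have hb := hband p hp
    have h1 := hb₁0 p hb.1
    have h2 := hb₂0 p hb.2
    have := hsum p (hsq (hUsub hp))
    linarith
  have hz₀ : ((3+c)/4, (1-c)/4) ∈ U := by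
    constructor <;> constructor <;> simp only [] <;> nlinarith
  have hconn : IsPreconnected (Ioo (0:ℝ) 1 ×ˢ Ioo (0:ℝ) 1) :=
    ((convex_Ioo _ _).prod (convex_Ioo _ _)).isPreconnected
  have hEqOpen : EqOn f₁ f₂ (Ioo (0:ℝ) 1 ×ˢ Ioo (0:ℝ) 1) :=
    hf₁a.eqOn_of_preconnected_of_eventuallyEq hf₂a hconn (hUsub hz₀)
      (Filter.eventuallyEq_of_mem (hUopen.mem_nhds hz₀) hEqU)
  have hclosure : Icc (0:ℝ) 1 ×ˢ Icc (0:ℝ) 1 ⊆ closure (Ioo (0:ℝ) 1 ×ˢ Ioo (0:ℝ) 1) := by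
    rw [closure_prod_eq, closure_Ioo (by norm_num : (0:ℝ) ≠ 1)]
  have hEqClosed : EqOn f₁ f₂ (Icc (0:ℝ) 1 ×ˢ Icc (0:ℝ) 1) :=
    hEqOpen.of_subset_closure hf₁c hf₂c hsq hclosure
  refine ⟨fun p hp => hEqClosed hp, fun p hp => ?_⟩
  have := hsum p hp
  have := hEqClosed hp
  linarith
end

section
/- Let L ∈ ℝ^{K×K} be a symmetric matrix of rank r such that every r × r minor of L is nonzero, and let Ω = {(i,j) : |i−j| > m} for some integer m with K ≥ 2r + 2 + 2m. Then L is the unique matrix of rank at most r agreeing with L on Ω: if L' has rank ≤ r and L'(i,j) = L(i,j) for all (i,j) ∈ Ω, then L' = L. -/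
open Matrix Function

open Matrix Function

/-- rank of a submatrix is at most the rank. -/
lemma rank_submatrix_le' {K n : ℕ} (M : Matrix (Fin K) (Fin K) ℝ)
    (f g : Fin n → Fin K) : (M.submatrix f g).rank ≤ M.rank := by
  have h1 : M * ((1 : Matrix (Fin K) (Fin K) ℝ).submatrix (Equiv.refl (Fin K)) g)
      = M.submatrix id g := by
    rw [Matrix.mul_submatrix_one]; rfl
  have h2 : ((1 : Matrix (Fin K) (Fin K) ℝ).submatrix f (Equiv.refl (Fin K)))
      * (M.submatrix id g) = M.submatrix f g := by
    rw [Matrix.one_submatrix_mul]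
    simp [Matrix.submatrix_submatrix]
  calc (M.submatrix f g).rank
      = (((1 : Matrix (Fin K) (Fin K) ℝ).submatrix f (Equiv.refl (Fin K)))
        * (M * ((1 : Matrix (Fin K) (Fin K) ℝ).submatrix (Equiv.refl (Fin K)) g))).rank := by
        rw [h1, h2]
    _ ≤ (M * ((1 : Matrix (Fin K) (Fin K) ℝ).submatrix (Equiv.refl (Fin K)) g)).rank :=
        Matrix.rank_mul_le_right _ _
    _ ≤ M.rank := Matrix.rank_mul_le_left _ _

lemma det_submatrix_eq_zero {K r : ℕ} (M : Matrix (Fin K) (Fin K) ℝ) (hM : M.rank ≤ r)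
    (ρ γ : Fin (r+1) → Fin K) : (M.submatrix ρ γ).det = 0 := by
  by_contra h
  have hu : IsUnit (M.submatrix ρ γ) :=
    (Matrix.isUnit_iff_isUnit_det _).mpr (isUnit_iff_ne_zero.mpr h)
  have := Matrix.rank_of_isUnit _ hu
  have h2 := rank_submatrix_le' M ρ γ
  rw [this] at h2
  simp [Fintype.card_fin] at h2
  omega


lemma det_one_unknown {n : ℕ} (A B : Matrix (Fin (n+1)) (Fin (n+1)) ℝ)
    (hA : A.det = 0) (hB : B.det = 0)
    (hAB : ∀ p q : Fin (n+1), p ≠ 0 ∨ q ≠ 0 → A p q = B p q)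
    (hm : (A.submatrix Fin.succ Fin.succ).det ≠ 0) : A 0 0 = B 0 0 := by
  set D : ℝ := (A.updateRow 0 (Pi.single 0 1)).det with hD
  -- D equals the minor
  have hDval : D = (A.submatrix Fin.succ Fin.succ).det := by
    rw [hD, Matrix.det_succ_row_zero]
    rw [Finset.sum_eq_single 0]
    · simp only [Matrix.updateRow_apply, if_pos rfl, Pi.single_eq_same, Fin.succAbove_zero,
        Fin.val_zero, pow_zero, one_mul]
      have he : (A.updateRow 0 (Pi.single 0 1)).submatrix Fin.succ Fin.succ
          = A.submatrix Fin.succ Fin.succ := by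
        ext p q
        simp [Matrix.updateRow_apply, Fin.succ_ne_zero]
      rw [he]
      simp
    · intro j _ hj
      simp [Matrix.updateRow_apply, Pi.single_eq_of_ne hj]
    · intro h; exact absurd (Finset.mem_univ _) h
  -- affine formula
  have key : ∀ x : ℝ, (A.updateRow 0 (Function.update (A 0) 0 x)).det
      = (A.updateRow 0 (Function.update (A 0) 0 0)).det + x * D := by
    intro x
    have hsplit : Function.update (A 0) 0 x
        = Function.update (A 0) 0 0 + x • (Pi.single 0 1 : Fin (n+1) → ℝ) := by
      ext q
      by_cases hq : q = 0 <;> simp [hq, Function.update_apply, Pi.single_apply]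
    rw [hsplit, Matrix.det_updateRow_add, Matrix.det_updateRow_smul]
  have hAx : (A.updateRow 0 (Function.update (A 0) 0 (A 0 0))).det = 0 := by
    rw [Function.update_eq_self, Matrix.updateRow_eq_self]; exact hA
  have hBx : (A.updateRow 0 (Function.update (A 0) 0 (B 0 0))).det = 0 := by
    have hBeq : B = A.updateRow 0 (Function.update (A 0) 0 (B 0 0)) := by
      ext p q
      by_cases hp : p = 0
      · subst hp
        by_cases hq : q = 0
        · subst hq; simp
        · simp [Matrix.updateRow_apply, Function.update_of_ne hq]
          exact (hAB 0 q (Or.inr hq)).symm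
      · simp [Matrix.updateRow_apply, hp]
        exact (hAB p q (Or.inl hp)).symm
    rw [← hBeq]; exact hB
  have h1 := key (A 0 0)
  have h2 := key (B 0 0)
  rw [hAx] at h1
  rw [hBx] at h2
  have : (A 0 0 - B 0 0) * D = 0 := by linarith
  rcases mul_eq_zero.mp this with h | h
  · linarith
  · rw [hDval] at h; exact absurd h hm


lemma fill' {K r : ℕ} (L L' : Matrix (Fin K) (Fin K) ℝ)
    (hL : L.rank ≤ r) (hL' : L'.rank ≤ r)
    (hminor : ∀ ρ γ : Fin r → Fin K, Function.Injective ρ → Function.Injective γ →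
      (L.submatrix ρ γ).det ≠ 0)
    (s t : Fin K) (f g : Fin r → Fin K)
    (hfinj : Function.Injective f) (hginj : Function.Injective g)
    (h1 : ∀ k, L' s (g k) = L s (g k)) (h2 : ∀ k, L' (f k) t = L (f k) t)
    (h3 : ∀ k k', L' (f k) (g k') = L (f k) (g k')) : L' s t = L s t := by
  set ρ : Fin (r+1) → Fin K := Fin.cases s f with hρdef
  set γ : Fin (r+1) → Fin K := Fin.cases t g with hγdef
  have hA : (L'.submatrix ρ γ).det = 0 := det_submatrix_eq_zero L' hL' ρ γ
  have hB : (L.submatrix ρ γ).det = 0 := det_submatrix_eq_zero L hL ρ γ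
  have hAB : ∀ p q : Fin (r+1), p ≠ 0 ∨ q ≠ 0 →
      (L'.submatrix ρ γ) p q = (L.submatrix ρ γ) p q := by
    intro p q hpq
    simp only [Matrix.submatrix_apply]
    induction p using Fin.cases with
    | zero =>
      induction q using Fin.cases with
      | zero => rcases hpq with h | h <;> exact absurd rfl h
      | succ q => simpa [ρ, γ] using h1 q
    | succ p =>
      induction q using Fin.cases with
      | zero => simpa [ρ, γ] using h2 p
      | succ q => simpa [ρ, γ] using h3 p q
  have hmin : ((L'.submatrix ρ γ).submatrix Fin.succ Fin.succ).det ≠ 0 := by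
    have he : (L'.submatrix ρ γ).submatrix Fin.succ Fin.succ = L.submatrix f g := by
      ext p q
      simp only [Matrix.submatrix_apply]
      simpa [ρ, γ] using h3 p q
    rw [he]
    exact hminor f g hfinj hginj
  have := det_one_unknown (L'.submatrix ρ γ) (L.submatrix ρ γ) hA hB hAB hmin
  simpa [ρ, γ] using this


/-- Step A: entries `(s,t)` with `s + r + m + 2 ≤ K` and `r + m ≤ t` are determined. -/
lemma stepA {K r m : ℕ} (hK : 2 * r + 2 + 2 * m ≤ K)
    (L L' : Matrix (Fin K) (Fin K) ℝ)
    (hL : L.rank ≤ r) (hL' : L'.rank ≤ r)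
    (hminor : ∀ ρ γ : Fin r → Fin K, Function.Injective ρ → Function.Injective γ →
      (L.submatrix ρ γ).det ≠ 0)
    (hΩ : ∀ s c : Fin K, ((s : ℕ) + m < c ∨ (c : ℕ) + m < s) → L' s c = L s c) :
    ∀ s t : Fin K, (s : ℕ) + r + m + 2 ≤ K → r + m ≤ (t : ℕ) → L' s t = L s t := by
  intro s t hs ht
  by_cases hband : (s : ℕ) + m < t ∨ (t : ℕ) + m < s
  · exact hΩ s t hband
  push_neg at hband
  obtain ⟨h1, h2⟩ := hband
  -- here r ≤ s
  have hsr : r ≤ (s : ℕ) := by omega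
  refine fill' L L' hL hL' hminor s t
    (fun k => ⟨(k : ℕ), by omega⟩)
    (fun k => ⟨(s : ℕ) + m + 1 + (k : ℕ), by omega⟩) ?_ ?_ ?_ ?_ ?_
  · intro k1 k2 h
    have := congrArg Fin.val h
    simp only at this
    exact Fin.ext this
  · intro k1 k2 h
    have := congrArg Fin.val h
    simp only at this
    exact Fin.ext (by omega)
  · intro k; exact hΩ _ _ (by left; simp; omega)
  · intro k
    have hk := k.isLt
    exact hΩ _ _ (by left; simp; omega)
  · intro k k'
    have hk := k.isLt
    exact hΩ _ _ (by left; simp; omega)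

/-- Exact low-rank matrix completion: a symmetric `K × K` matrix `L` of rank `r` all of whose
`r × r` minors are nonzero is the unique matrix of rank at most `r` agreeing with `L` on the
off-band index set `Ω = {(i,j) : |i−j| > m}`, provided `K ≥ 2r + 2 + 2m`. -/

theorem unique_low_rank_completion
    (K r m : ℕ) (hK : 2 * r + 2 + 2 * m ≤ K)
    (L : Matrix (Fin K) (Fin K) ℝ) (hsym : L.IsSymm) (hrank : L.rank = r)
    (hminor : ∀ ρ γ : Fin r → Fin K, Function.Injective ρ → Function.Injective γ →
      (L.submatrix ρ γ).det ≠ 0) :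
    ∀ L' : Matrix (Fin K) (Fin K) ℝ, L'.rank ≤ r →
      (∀ i j : Fin K, (m : ℤ) < |(i : ℤ) - (j : ℤ)| → L' i j = L i j) → L' = L := by
  intro L' hrank' hΩZ
  have hL : L.rank ≤ r := le_of_eq hrank
  have hΩ : ∀ s c : Fin K, ((s : ℕ) + m < c ∨ (c : ℕ) + m < s) → L' s c = L s c := by
    intro s c h
    apply hΩZ
    rw [lt_abs]
    push_cast
    omega
  have hminorT : ∀ ρ γ : Fin r → Fin K, Function.Injective ρ → Function.Injective γ →
      ((Lᵀ).submatrix ρ γ).det ≠ 0 := by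
    intro ρ γ hρ hγ
    rw [← Matrix.transpose_submatrix, Matrix.det_transpose]
    exact hminor γ ρ hγ hρ
  have hLT : Lᵀ.rank ≤ r := by rw [Matrix.rank_transpose]; exact hL
  have hL'T : L'ᵀ.rank ≤ r := by rw [Matrix.rank_transpose]; exact hrank'
  have hΩT : ∀ s c : Fin K, ((s : ℕ) + m < c ∨ (c : ℕ) + m < s) → L'ᵀ s c = Lᵀ s c := by
    intro s c h
    exact hΩ c s h.symm
  have hA : ∀ s t : Fin K, (s : ℕ) + r + m + 2 ≤ K → r + m ≤ (t : ℕ) → L' s t = L s t :=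
    stepA hK L L' hL hrank' hminor hΩ
  have hB : ∀ s t : Fin K, r + m ≤ (s : ℕ) → (t : ℕ) + r + m + 2 ≤ K → L' s t = L s t := by
    intro s t hs ht
    exact stepA hK Lᵀ L'ᵀ hLT hL'T hminorT hΩT t s ht hs
  have main : ∀ t : ℕ, ∀ s c : Fin K, ((s : ℕ) = t ∨ (c : ℕ) = t) → L' s c = L s c := by
    intro t
    induction t using Nat.strong_induction_on with
    | _ t IH =>
    have hfull : ∀ s c : Fin K, ((s : ℕ) < t ∨ (c : ℕ) < t) → L' s c = L s c := by
      intro s c h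
      rcases h with h | h
      · exact IH _ h s c (Or.inl rfl)
      · exact IH _ h s c (Or.inr rfl)
    have hcol : ∀ s c : Fin K, (c : ℕ) = t → L' s c = L s c := by
      intro s c hc
      rcases Nat.lt_or_ge (s : ℕ) t with hst | hst
      · exact hfull s c (Or.inl hst)
      by_cases htr : r ≤ t
      · -- easy case: use the fully-known first r rows and columns
        refine fill' L L' hL hrank' hminor s c
          (fun k => ⟨(k : ℕ), by have := k.isLt; omega⟩)
          (fun k => ⟨(k : ℕ), by have := k.isLt; omega⟩)
          (fun k1 k2 h => Fin.ext (by simpa using congrArg Fin.val h))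
          (fun k1 k2 h => Fin.ext (by simpa using congrArg Fin.val h))
          ?_ ?_ ?_
        · intro k; exact hfull _ _ (Or.inr (by have := k.isLt; simp <;> omega))
        · intro k; exact hfull _ _ (Or.inl (by have := k.isLt; simp <;> omega))
        · intro k k'; exact hfull _ _ (Or.inl (by have := k.isLt; simp <;> omega))
      · push_neg at htr
        by_cases hb1 : (s : ℕ) + m < c ∨ (c : ℕ) + m < s
        · exact hΩ s c hb1
        push_neg at hb1
        obtain ⟨hb11, hb12⟩ := hb1
        by_cases hb2 : r + m ≤ (s : ℕ)
        · exact hB s c hb2 (by omega)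
        · push_neg at hb2
          -- corner construction for a column entry
          refine fill' L L' hL hrank' hminor s c
            (fun k => ⟨if (k : ℕ) < t then (k : ℕ) else (k : ℕ) + m + 1,
              by have := k.isLt; split <;> omega⟩)
            (fun k => ⟨if (k : ℕ) < t then (k : ℕ) else (k : ℕ) + (r + 2*m + 1 - t),
              by have := k.isLt; split <;> omega⟩)
            ?_ ?_ ?_ ?_ ?_
          · intro k1 k2 h
            have h' := congrArg Fin.val h
            simp only at h'
            have := k1.isLt; have := k2.isLt
            exact Fin.ext (by split_ifs at h' <;> omega)
          · intro k1 k2 h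
            have h' := congrArg Fin.val h
            simp only at h'
            have := k1.isLt; have := k2.isLt
            exact Fin.ext (by split_ifs at h' <;> omega)
          · intro k
            by_cases hk : (k : ℕ) < t
            · exact hfull _ _ (Or.inr (by simp [hk] <;> omega))
            · exact hΩ _ _ (Or.inl (by have := k.isLt; simp [hk] <;> omega))
          · intro k
            by_cases hk : (k : ℕ) < t
            · exact hfull _ _ (Or.inl (by simp [hk] <;> omega))
            · exact hΩ _ _ (Or.inr (by simp [hk] <;> omega))
          · intro k k'
            by_cases hk : (k : ℕ) < t
            · exact hfull _ _ (Or.inl (by simp [hk] <;> omega))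
            · by_cases hk' : (k' : ℕ) < t
              · exact hfull _ _ (Or.inr (by simp [hk'] <;> omega))
              · exact hΩ _ _ (Or.inl
                  (by have := k.isLt; have := k'.isLt; simp [hk, hk'] <;> omega))
    intro s c h
    rcases h with hs | hc
    · rcases lt_trichotomy ((c : ℕ)) t with h | h | h
      · exact hfull s c (Or.inr h)
      · exact hcol s c h
      · by_cases htr : r ≤ t
        · refine fill' L L' hL hrank' hminor s c
            (fun k => ⟨(k : ℕ), by have := k.isLt; omega⟩)
            (fun k => ⟨(k : ℕ), by have := k.isLt; omega⟩)
            (fun k1 k2 hh => Fin.ext (by simpa using congrArg Fin.val hh))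
            (fun k1 k2 hh => Fin.ext (by simpa using congrArg Fin.val hh))
            ?_ ?_ ?_
          · intro k; exact hfull _ _ (Or.inr (by have := k.isLt; simp <;> omega))
          · intro k; exact hfull _ _ (Or.inl (by have := k.isLt; simp <;> omega))
          · intro k k'; exact hfull _ _ (Or.inl (by have := k.isLt; simp <;> omega))
        · push_neg at htr
          by_cases hb1 : (s : ℕ) + m < c ∨ (c : ℕ) + m < s
          · exact hΩ s c hb1
          push_neg at hb1
          obtain ⟨hb11, hb12⟩ := hb1
          by_cases hb2 : r + m ≤ (c : ℕ)
          · exact hA s c (by omega) hb2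
          · push_neg at hb2
            -- corner construction for a row entry (uses current column t via hcol)
            refine fill' L L' hL hrank' hminor s c
              (fun k => ⟨if (k : ℕ) < t then (k : ℕ) else (k : ℕ) + (r + 2*m - t),
                by have := k.isLt; split <;> omega⟩)
              (fun k => ⟨if (k : ℕ) ≤ t then (k : ℕ) else (k : ℕ) + m,
                by have := k.isLt; split <;> omega⟩)
              ?_ ?_ ?_ ?_ ?_
            · intro k1 k2 hh
              have h' := congrArg Fin.val hh
              simp only at h'
              have := k1.isLt; have := k2.isLt
              exact Fin.ext (by split_ifs at h' <;> omega)
            · intro k1 k2 hh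
              have h' := congrArg Fin.val hh
              simp only at h'
              have := k1.isLt; have := k2.isLt
              exact Fin.ext (by split_ifs at h' <;> omega)
            · intro k
              by_cases hk : (k : ℕ) < t
              · exact hfull _ _ (Or.inr (by simp [Nat.le_of_lt hk] <;> omega))
              · by_cases hk2 : (k : ℕ) ≤ t
                · exact hcol _ _ (by simp [hk2] <;> omega)
                · exact hΩ _ _ (Or.inl (by simp [hk2] <;> omega))
            · intro k
              by_cases hk : (k : ℕ) < t
              · exact hfull _ _ (Or.inl (by simp [hk] <;> omega))
              · exact hΩ _ _ (Or.inr (by have := k.isLt; simp [hk] <;> omega))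
            · intro k k'
              by_cases hk : (k : ℕ) < t
              · exact hfull _ _ (Or.inl (by simp [hk] <;> omega))
              · by_cases hk' : (k' : ℕ) < t
                · exact hfull _ _ (Or.inr (by simp [Nat.le_of_lt hk'] <;> omega))
                · by_cases hk'2 : (k' : ℕ) ≤ t
                  · exact hcol _ _ (by simp [hk'2] <;> omega)
                  · exact hΩ _ _ (Or.inr
                      (by have := k.isLt; have := k'.isLt; simp [hk, hk'2] <;> omega))
    · exact hcol s c hc
  ext i j
  exact main (j : ℕ) i j (Or.inr rfl)
end

section
/- Let φ : [0,1] → ℝ be the bump function φ(x) = exp(−1/(1−(x/δ)²)) for 0 ≤ x < δ and φ(x) = 0 otherwise, and let ψ(x) = x. Set ℓ₁(x,y) = ψ(x)ψ(y), ℓ₂(x,y) = ψ(x)ψ(y) + φ(x)φ(y), b₁(x,y) = φ(x)φ(y), b₂ = 0. Then ℓ₁ + b₁ = ℓ₂ + b₂, b₁ is supported in [0,δ]² (hence δ-banded), ℓ₁ has rank 1 and ℓ₂ has rank 2 as integral kernels, and b₁ is a valid (nonnegative-definite, rank-one) covariance kernel; thus finite-rank smoothness alone without analyticity does not guarantee uniqueness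 of the decomposition. -/
open Set MeasureTheory

/-- The rank of a kernel `k` on `[0,1]²`: the dimension of the span of its sections
`y ↦ k(x,y)`, `x ∈ [0,1]`. -/
noncomputable def kernelRank (k : ℝ × ℝ → ℝ) : ℕ :=
  Module.finrank ℝ (Submodule.span ℝ ((fun x : ℝ => fun y : ℝ => k (x, y)) '' Icc (0:ℝ) 1))

/-- Finite-rank counterexample: with the bump `φ` supported in `[0,δ)` and `ψ(x) = x`,
setting `ℓ₁ = ψ⊗ψ`, `ℓ₂ = ψ⊗ψ + φ⊗φ`, `b₁ = φ⊗φ`, `b₂ = 0`, one has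
`ℓ₁ + b₁ = ℓ₂ + b₂`, `b₁` is supported in `[0,δ]²`, `ℓ₁` has rank 1 and `ℓ₂` rank 2 as
integral kernels, and `b₁` is a nonnegative-definite rank-one covariance kernel. -/
theorem counterexample_finite_rank_not_unique
    (δ : ℝ) (hδ0 : 0 < δ) (hδ1 : δ < 1)
    (φ ψ : ℝ → ℝ)
    (hφ : ∀ x : ℝ, φ x = if 0 ≤ x ∧ x < δ then Real.exp (-1 / (1 - (x / δ) ^ 2)) else 0)
    (hψ : ∀ x : ℝ, ψ x = x)
    (ℓ₁ ℓ₂ b₁ b₂ : ℝ × ℝ → ℝ)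
    (h1 : ∀ p : ℝ × ℝ, ℓ₁ p = ψ p.1 * ψ p.2)
    (h2 : ∀ p : ℝ × ℝ, ℓ₂ p = ψ p.1 * ψ p.2 + φ p.1 * φ p.2)
    (h3 : ∀ p : ℝ × ℝ, b₁ p = φ p.1 * φ p.2)
    (h4 : ∀ p : ℝ × ℝ, b₂ p = 0) :
    (∀ p : ℝ × ℝ, ℓ₁ p + b₁ p = ℓ₂ p + b₂ p) ∧
    (∀ p : ℝ × ℝ, p ∉ Icc (0:ℝ) δ ×ˢ Icc (0:ℝ) δ → b₁ p = 0) ∧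
    kernelRank ℓ₁ = 1 ∧ kernelRank ℓ₂ = 2 ∧ kernelRank b₁ = 1 ∧
    (∀ f : ℝ → ℝ, ContinuousOn f (Icc (0:ℝ) 1) →
      0 ≤ ∫ x in (0:ℝ)..1, ∫ y in (0:ℝ)..1, b₁ (x, y) * f x * f y) ∧
    ℓ₁ ≠ ℓ₂ ∧ b₁ ≠ b₂ := by
  set idf : ℝ → ℝ := fun y => y with hidf
  have hφ0 : φ 0 = Real.exp (-1) := by
    rw [hφ]; simp [hδ0, le_refl]
  have hφ0ne : φ 0 ≠ 0 := by rw [hφ0]; exact Real.exp_ne_zero _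
  have hφ1 : φ 1 = 0 := by
    rw [hφ, if_neg]
    rintro ⟨-, hc⟩
    linarith
  have hφne : φ ≠ 0 := by
    intro hh
    apply hφ0ne
    rw [hh]
    rfl
  have hidfne : idf ≠ 0 := by
    intro hh
    have := congrFun hh 1
    simp [hidf] at this
  have hli : LinearIndependent ℝ ![idf, φ] := by
    rw [LinearIndependent.pair_iff]
    intro s t hst
    have h0 := congrFun hst 0
    have h1' := congrFun hst 1
    simp only [hidf, Pi.add_apply, Pi.smul_apply, smul_eq_mul, Pi.zero_apply, hφ0, hφ1] at h0 h1'
    constructor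
    · nlinarith [h0, h1']
    · nlinarith [h0, Real.exp_pos (-1 : ℝ), sq_nonneg t]
  have key1 : kernelRank ℓ₁ = 1 := by
    unfold kernelRank
    have himg : (fun x : ℝ => fun y : ℝ => ℓ₁ (x, y)) = (fun x : ℝ => fun y : ℝ => x * y) := by
      funext x y; simp [h1, hψ]
    rw [himg]
    have hspan : Submodule.span ℝ ((fun x : ℝ => fun y : ℝ => x * y) '' Icc (0:ℝ) 1)
        = Submodule.span ℝ {idf} := by
      apply le_antisymm
      · rw [Submodule.span_le]
        rintro g ⟨x, -, rfl⟩
        dsimp only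
        have hx : (fun y : ℝ => x * y) = x • idf := by funext y; simp [hidf]
        rw [hx]
        exact Submodule.smul_mem _ _ (Submodule.subset_span rfl)
      · rw [Submodule.span_le]
        intro g hg
        rw [mem_singleton_iff] at hg
        rw [hg]
        apply Submodule.subset_span
        exact ⟨1, by norm_num, by funext y; simp [hidf]⟩
    rw [hspan]
    exact finrank_span_singleton hidfne
  have key3 : kernelRank b₁ = 1 := by
    unfold kernelRank
    have hspan : Submodule.span ℝ ((fun x : ℝ => fun y : ℝ => b₁ (x, y)) '' Icc (0:ℝ) 1)
        = Submodule.span ℝ {φ} := by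
      apply le_antisymm
      · rw [Submodule.span_le]
        rintro g ⟨x, -, rfl⟩
        dsimp only
        have hx : (fun y : ℝ => b₁ (x, y)) = φ x • φ := by funext y; simp [h3]
        rw [hx]
        exact Submodule.smul_mem _ _ (Submodule.subset_span rfl)
      · rw [Submodule.span_le]
        intro g hg
        rw [mem_singleton_iff] at hg
        rw [hg]
        have hmem : (fun y : ℝ => b₁ (0, y)) ∈ Submodule.span ℝ
            ((fun x : ℝ => fun y : ℝ => b₁ (x, y)) '' Icc (0:ℝ) 1) :=
          Submodule.subset_span ⟨0, by norm_num, rfl⟩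
        have heq : φ = (φ 0)⁻¹ • (fun y : ℝ => b₁ (0, y)) := by
          funext y
          simp only [Pi.smul_apply, smul_eq_mul, h3]
          field_simp
        rw [heq]
        exact Submodule.smul_mem _ _ hmem
    rw [hspan]
    exact finrank_span_singleton hφne
  have key2 : kernelRank ℓ₂ = 2 := by
    unfold kernelRank
    have hspan : Submodule.span ℝ ((fun x : ℝ => fun y : ℝ => ℓ₂ (x, y)) '' Icc (0:ℝ) 1)
        = Submodule.span ℝ {idf, φ} := by
      apply le_antisymm
      · rw [Submodule.span_le]
        rintro g ⟨x, -, rfl⟩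
        dsimp only
        have hx : (fun y : ℝ => ℓ₂ (x, y)) = x • idf + φ x • φ := by
          funext y; simp [h2, hψ, hidf]
        rw [hx]
        exact Submodule.add_mem _
          (Submodule.smul_mem _ _ (Submodule.subset_span (by simp)))
          (Submodule.smul_mem _ _ (Submodule.subset_span (by simp)))
      · rw [Submodule.span_le]
        intro g hg
        have hmem1 : (fun y : ℝ => ℓ₂ (1, y)) ∈ Submodule.span ℝ
            ((fun x : ℝ => fun y : ℝ => ℓ₂ (x, y)) '' Icc (0:ℝ) 1) :=
          Submodule.subset_span ⟨1, by norm_num, rfl⟩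
        have hmem0 : (fun y : ℝ => ℓ₂ (0, y)) ∈ Submodule.span ℝ
            ((fun x : ℝ => fun y : ℝ => ℓ₂ (x, y)) '' Icc (0:ℝ) 1) :=
          Submodule.subset_span ⟨0, by norm_num, rfl⟩
        have hid : idf = (fun y : ℝ => ℓ₂ (1, y)) := by
          funext y; simp [h2, hψ, hφ1, hidf]
        have hphi : φ = (φ 0)⁻¹ • (fun y : ℝ => ℓ₂ (0, y)) := by
          funext y
          simp only [Pi.smul_apply, smul_eq_mul, h2, hψ]
          field_simp
          ring
        rcases hg with hh | hh
        · rw [hh, hid]; exact hmem1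
        · rw [mem_singleton_iff] at hh
          rw [hh, hphi]
          exact Submodule.smul_mem _ _ hmem0
    rw [hspan]
    have hrange : Set.range ![idf, φ] = {idf, φ} := by
      simp [Matrix.range_cons, Matrix.range_empty]
      exact Set.pair_comm φ idf
    rw [← hrange, finrank_span_eq_card hli]
    simp
  refine ⟨?_, ?_, key1, key2, key3, ?_, ?_, ?_⟩
  · intro p; rw [h1, h2, h3, h4]; ring
  · rintro ⟨x, y⟩ hp
    rw [h3]
    simp only [mem_prod, mem_Icc, not_and_or] at hp
    have hz : ∀ z : ℝ, ¬ (0 ≤ z ∧ z ≤ δ) → φ z = 0 := by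
      intro z hzz
      rw [hφ, if_neg]
      rintro ⟨hz1, hz2⟩
      exact hzz ⟨hz1, le_of_lt hz2⟩
    rcases hp with hh | hh
    · rw [hz x (by tauto)]; ring
    · rw [hz y (by tauto)]; ring
  · intro f hf
    have hrw : ∀ x y : ℝ, b₁ (x, y) * f x * f y = (φ x * f x) * (φ y * f y) := by
      intro x y; rw [h3]; ring
    have hkey : (∫ x in (0:ℝ)..1, ∫ y in (0:ℝ)..1, b₁ (x, y) * f x * f y)
        = (∫ y in (0:ℝ)..1, φ y * f y) * (∫ y in (0:ℝ)..1, φ y * f y) := by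
      rw [show (fun x => ∫ y in (0:ℝ)..1, b₁ (x, y) * f x * f y)
          = fun x => (φ x * f x) * ∫ y in (0:ℝ)..1, φ y * f y from ?_]
      · rw [intervalIntegral.integral_mul_const]
      · funext x
        rw [show (fun y => b₁ (x, y) * f x * f y) = fun y => (φ x * f x) * (φ y * f y) from
          funext fun y => hrw x y]
        exact intervalIntegral.integral_const_mul _ _
    rw [hkey]
    exact mul_self_nonneg _
  · intro h
    have h00 := congrFun h (0, 0)
    rw [h1, h2] at h00
    simp only [hψ] at h00
    norm_num at h00
    exact hφ0ne h00
  · intro h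
    have h00 := congrFun h (0, 0)
    rw [h3, h4] at h00
    simp only at h00
    exact hφ0ne (mul_self_eq_zero.mp h00)
end
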